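/- For every integer n ≥ 4, v₃(n) ≤ √n. Explicitly: if n ≥ 4 is an integer such that 9 does not divide n and no prime divisor of n is congruent to 2 modulo 3, and k is the number of distinct prime divisors of n congruent to 1 modulo 3, then 2^k ≤ √n (in all other cases v₃(n) = 0 and the inequality is trivial). -/
import Mathlib


/-- `v₃(n)`, the number of order-three cone points of `ℍ²/Γ₀(n)`: it is `0` if `9 ∣ n` or if
some prime divisor of `n` is `≡ 2 (mod 3)`, and `2 ^ k` otherwise, where `k` is the number of
distinct prime divisors of `n` that are `≡ 1 (mod 3)`. -/
def v3 (n : ℕ) : ℕ :=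
  if 9 ∣ n ∨ ∃ p ∈ n.primeFactors, p % 3 = 2 then 0
  else 2 ^ (n.primeFactors.filter fun p => p % 3 = 1).card

/-- **Claim.** For every integer `n ≥ 4`, we have `v₃(n) ≤ √n`. -/
theorem stmt5 (n : ℕ) (hn : 4 ≤ n) : (v3 n : ℝ) ≤ Real.sqrt n := by
  rw [v3]
  split
  · simp
  · set S := n.primeFactors.filter fun p => p % 3 = 1 with hS
    have hsq : (v3 n : ℕ) = v3 n := rfl
    have key : 4 ^ S.card ≤ n := by
      calc 4 ^ S.card = ∏ _p ∈ S, 4 := by rw [Finset.prod_const]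
        _ ≤ ∏ p ∈ S, p := by
            apply Finset.prod_le_prod'
            intro p hp
            simp only [hS, Finset.mem_filter] at hp
            have hprime := Nat.prime_of_mem_primeFactors hp.1
            have := hprime.two_le
            omega
        _ ≤ n := by
            apply Nat.le_of_dvd (by omega)
            exact (Finset.prod_dvd_prod_of_subset _ _ _
              (Finset.filter_subset _ _)).trans (Nat.prod_primeFactors_dvd n)
    push_cast
    rw [Real.le_sqrt (by positivity)]
    have : ((4:ℝ)) ^ S.card ≤ (n : ℝ) := by exact_mod_cast key
    calc ((2:ℝ) ^ S.card) ^ 2 = 4 ^ S.card := by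
          rw [← pow_mul, mul_comm, pow_mul]; norm_num
      _ ≤ n := this
    positivity
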